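/- Let K be an algebraically closed field, and let V, W ⊆ K^2 be the zero sets of polynomials F and G respectively, where F and G have no common non-constant divisor. Then V ∩ W is finite and has at most deg(F)·deg(G) points. -/

import Mathlib

open MvPolynomial

lemma my_degree_add {σ : Type*} (a b : σ →₀ ℕ) :
    Finsupp.degree (a + b) = Finsupp.degree a + Finsupp.degree b := by
  simp [Finsupp.degree_eq_weight_one]

lemma my_totalDegree_mul_eq {R σ : Type*} [CommRing R] [IsDomain R] [DecidableEq σ]
    {p q : MvPolynomial σ R} (hp : p ≠ 0) (hq : q ≠ 0) :
    (p * q).totalDegree = p.totalDegree + q.totalDegree := by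
  refine le_antisymm (totalDegree_mul p q) ?_
  set P := homogeneousComponent p.totalDegree p with hP
  set Q := homogeneousComponent q.totalDegree q with hQ
  have hPne : P ≠ 0 := by
    obtain ⟨d, hd, hdeq⟩ := Finset.exists_mem_eq_sup p.support
      (support_nonempty.mpr hp) (fun s => s.sum fun _ e => e)
    have : coeff d P ≠ 0 := by
      rw [hP, coeff_homogeneousComponent, if_pos]
      · exact mem_support_iff.mp hd
      · show d.degree = p.totalDegree
        rw [MvPolynomial.totalDegree, hdeq]; rfl
    exact fun h => this (by simp [h])
  have hQne : Q ≠ 0 := by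
    obtain ⟨d, hd, hdeq⟩ := Finset.exists_mem_eq_sup q.support
      (support_nonempty.mpr hq) (fun s => s.sum fun _ e => e)
    have : coeff d Q ≠ 0 := by
      rw [hQ, coeff_homogeneousComponent, if_pos]
      · exact mem_support_iff.mp hd
      · show d.degree = q.totalDegree
        rw [MvPolynomial.totalDegree, hdeq]; rfl
    exact fun h => this (by simp [h])
  have hPQ : P * Q ≠ 0 := mul_ne_zero hPne hQne
  obtain ⟨d, hd⟩ : ∃ d, coeff d (P * Q) ≠ 0 := by
    by_contra h; push_neg at h; exact hPQ (MvPolynomial.ext _ _ (by simpa using h))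
  have hhom : (P * Q).IsHomogeneous (p.totalDegree + q.totalDegree) :=
    (homogeneousComponent_isHomogeneous _ _).mul (homogeneousComponent_isHomogeneous _ _)
  have hddeg : d.degree = p.totalDegree + q.totalDegree := by
    by_contra hne; exact hd (hhom.coeff_eq_zero hne)
  have hdegsum : ∀ s : σ →₀ ℕ, (∑ i ∈ s.support, s i) = s.degree := fun s => rfl
  have hcoeff : coeff d (p * q) = coeff d (P * Q) := by
    rw [coeff_mul, coeff_mul]
    refine Finset.sum_congr rfl fun x hx => ?_
    rw [Finset.HasAntidiagonal.mem_antidiagonal] at hx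
    have hsum : x.1.degree + x.2.degree = p.totalDegree + q.totalDegree := by
      rw [← hddeg, ← hx, my_degree_add]
    by_cases h1 : x.1.degree = p.totalDegree
    · have h2 : x.2.degree = q.totalDegree := by omega
      rw [hP, hQ, coeff_homogeneousComponent, coeff_homogeneousComponent, if_pos h1, if_pos h2]
    · rcases lt_or_gt_of_ne h1 with hlt | hgt
      · have h2 : q.totalDegree < x.2.degree := by omega
        have e1 : coeff x.2 q = 0 := coeff_eq_zero_of_totalDegree_lt (by rw [hdegsum]; exact h2)
        rw [hQ, coeff_homogeneousComponent, if_neg (by omega), e1]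
        ring
      · have e1 : coeff x.1 p = 0 := coeff_eq_zero_of_totalDegree_lt (by rw [hdegsum]; exact hgt)
        rw [e1, hP, coeff_homogeneousComponent, if_neg h1]
        ring
  have hmem : d ∈ (p * q).support := mem_support_iff.mpr (by rw [hcoeff]; exact hd)
  have := MvPolynomial.le_totalDegree hmem
  calc p.totalDegree + q.totalDegree = d.degree := hddeg.symm
    _ ≤ (p * q).totalDegree := this

def sigEquiv (d : ℕ) : {p : ℕ × ℕ // p.1 + p.2 ≤ d} ≃ Σ a : Fin (d+1), Fin (d+1-(a:ℕ)) where
  toFun p := ⟨⟨p.1.1, by omega⟩, ⟨p.1.2, by show p.1.2 < d + 1 - p.1.1; have := p.2; omega⟩⟩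
  invFun x := ⟨(x.1, x.2), by have := x.2.isLt; have := x.1.isLt; omega⟩
  left_inv p := by ext <;> rfl
  right_inv x := by ext <;> rfl

noncomputable instance instFintypePairs (d : ℕ) : Fintype {p : ℕ × ℕ // p.1 + p.2 ≤ d} :=
  Fintype.ofEquiv _ (sigEquiv d).symm

lemma card_pairs (d : ℕ) : 2 * Fintype.card {p : ℕ × ℕ // p.1 + p.2 ≤ d} = (d+1)*(d+2) := by
  rw [Fintype.card_congr (sigEquiv d), Fintype.card_sigma]
  simp only [Fintype.card_fin]
  rw [Fin.sum_univ_eq_sum_range (fun a => d + 1 - a) (d+1)]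
  have h1 : ∑ a ∈ Finset.range (d+1), (d + 1 - a) = ∑ a ∈ Finset.range (d+1), (a + 1) := by
    rw [← Finset.sum_range_reflect]
    refine Finset.sum_congr rfl fun x hx => ?_
    rw [Finset.mem_range] at hx; omega
  have h3 : ∑ a ∈ Finset.range (d+2), a = ∑ a ∈ Finset.range (d+1), (a+1) := by
    rw [Finset.sum_range_succ' (fun a => a) (d+1)]
    simp
  have h2 := Finset.sum_range_id_mul_two (d+2)
  rw [h1, ← h3, mul_comm 2, h2]
  have : d + 2 - 1 = d + 1 := rfl
  rw [this, mul_comm]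

noncomputable def finsuppEquiv (d : ℕ) :
    {s : Fin 2 →₀ ℕ // (s.sum fun _ e => e) ≤ d} ≃ {p : ℕ × ℕ // p.1 + p.2 ≤ d} where
  toFun s := ⟨(s.1 0, s.1 1), by
    have := s.2
    rwa [Finsupp.sum_fintype _ _ (fun _ => rfl), Fin.sum_univ_two] at this⟩
  invFun p := ⟨Finsupp.equivFunOnFinite.symm ![p.1.1, p.1.2], by
    rw [Finsupp.sum_fintype _ _ (fun _ => rfl), Fin.sum_univ_two]
    simpa using p.2⟩
  left_inv s := by
    ext i
    fin_cases i <;> simp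
  right_inv p := by
    ext <;> simp

noncomputable instance instFintypeDeg (d : ℕ) :
    Fintype {s : Fin 2 →₀ ℕ // (s.sum fun _ e => e) ≤ d} :=
  Fintype.ofEquiv _ (finsuppEquiv d).symm

lemma finrank_rtd (K : Type*) [Field K] (d : ℕ) :
    2 * Module.finrank K (restrictTotalDegree (Fin 2) K d) = (d+1)*(d+2) := by
  have b := MvPolynomial.basisRestrictSupport K {n : Fin 2 →₀ ℕ | (n.sum fun _ e => e) ≤ d}
  have : Module.finrank K (restrictTotalDegree (Fin 2) K d)
      = Fintype.card {s : Fin 2 →₀ ℕ // (s.sum fun _ e => e) ≤ d} :=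
    Module.finrank_eq_card_basis b
  rw [this, Fintype.card_congr (finsuppEquiv d), card_pairs]

open Classical in
noncomputable def Lpoly {K : Type*} [Field K] (z w : K × K) : MvPolynomial (Fin 2) K :=
  if z.1 ≠ w.1 then C (z.1 - w.1)⁻¹ * (X 0 - C w.1) else C (z.2 - w.2)⁻¹ * (X 1 - C w.2)

section
variable {K : Type*} [Field K]

lemma Lpoly_deg (z w : K × K) : (Lpoly z w).totalDegree ≤ 1 := by
  have h : ∀ (i : Fin 2) (c a : K), (C c * (X i - C a)).totalDegree ≤ 1 := by
    intro i c a
    refine le_trans (totalDegree_mul _ _) ?_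
    rw [totalDegree_C, sub_eq_add_neg]
    have h2 : (X i + -C a : MvPolynomial (Fin 2) K).totalDegree ≤ 1 := by
      refine le_trans (totalDegree_add _ _) ?_
      rw [totalDegree_X, totalDegree_neg, totalDegree_C]
      simp
    omega
  unfold Lpoly
  split <;> apply h

lemma Lpoly_self {z w : K × K} (hzw : z ≠ w) : eval ![z.1, z.2] (Lpoly z w) = 1 := by
  unfold Lpoly
  split
  · rename_i h
    simp only [map_mul, map_sub, eval_C, eval_X]
    simp only [Matrix.cons_val_zero]
    exact inv_mul_cancel₀ (sub_ne_zero.mpr h)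
  · rename_i h
    push_neg at h
    have h2 : z.2 ≠ w.2 := fun h2 => hzw (Prod.ext h h2)
    simp only [map_mul, map_sub, eval_C, eval_X]
    simp only [Matrix.cons_val_one, Matrix.head_cons]
    exact inv_mul_cancel₀ (sub_ne_zero.mpr h2)

lemma Lpoly_other (z w : K × K) : eval ![w.1, w.2] (Lpoly z w) = 0 := by
  unfold Lpoly
  split <;> simp

lemma interp (S : Finset (K × K)) (z : K × K) (hz : z ∈ S) :
    ∃ q : MvPolynomial (Fin 2) K, q.totalDegree ≤ S.card ∧ eval ![z.1, z.2] q = 1 ∧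
      ∀ w ∈ S, w ≠ z → eval ![w.1, w.2] q = 0 := by
  classical
  refine ⟨∏ w ∈ S.erase z, Lpoly z w, ?_, ?_, ?_⟩
  · refine le_trans (totalDegree_finset_prod _ _) ?_
    refine le_trans (Finset.sum_le_sum fun w _ => Lpoly_deg z w) ?_
    simp only [Finset.sum_const, smul_eq_mul, mul_one]
    exact le_trans (Finset.card_erase_le) le_rfl
  · rw [map_prod]
    refine Finset.prod_eq_one fun w hw => ?_
    exact Lpoly_self (fun h => (Finset.mem_erase.mp hw).1 h.symm)
  · intro w hw hwz
    rw [map_prod]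
    exact Finset.prod_eq_zero (Finset.mem_erase.mpr ⟨hwz, hw⟩) (Lpoly_other z w)



set_option maxHeartbeats 1000000 in
lemma key' (F G : MvPolynomial (Fin 2) K) (hF : F ≠ 0) (hG : G ≠ 0)
    (hcd : IsRelPrime F G) (S : Finset (K × K))
    (hS : ∀ z ∈ S, eval ![z.1, z.2] F = 0 ∧ eval ![z.1, z.2] G = 0)
    (m n k : ℕ) (hFm : F.totalDegree ≤ m) (hGn : G.totalDegree = n) (hkS : S.card = k) :
    k ≤ m * n := by
  classical
  -- the four spaces
  let Vd := restrictTotalDegree (Fin 2) K (m + n + k)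
  let Va := restrictTotalDegree (Fin 2) K (n + k)
  let Vb := restrictTotalDegree (Fin 2) K (m + k)
  let Vc := restrictTotalDegree (Fin 2) K k
  -- the map (a, b) ↦ a F + b G
  let φ : MvPolynomial (Fin 2) K × MvPolynomial (Fin 2) K →ₗ[K] MvPolynomial (Fin 2) K :=
    (LinearMap.mulLeft K F).comp (LinearMap.fst K _ _) +
      (LinearMap.mulLeft K G).comp (LinearMap.snd K _ _)
  have hφ : ∀ x : MvPolynomial (Fin 2) K × MvPolynomial (Fin 2) K,
      φ x = F * x.1 + G * x.2 := fun x => rfl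
  have hΦmem : ∀ x : Va × Vb, φ ((Va.subtype.prodMap Vb.subtype) x) ∈ Vd := by
    rintro ⟨⟨a, ha⟩, ⟨b, hb⟩⟩
    have ha' : a.totalDegree ≤ n + k := (mem_restrictTotalDegree _ _ _).mp ha
    have hb' : b.totalDegree ≤ m + k := (mem_restrictTotalDegree _ _ _).mp hb
    show F * a + G * b ∈ Vd
    refine (mem_restrictTotalDegree _ _ _).mpr ?_
    refine le_trans (totalDegree_add _ _) (max_le ?_ ?_)
    · exact le_trans (totalDegree_mul _ _) (by omega)
    · exact le_trans (totalDegree_mul _ _) (by omega)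
  let Φ : (Va × Vb) →ₗ[K] Vd :=
    LinearMap.codRestrict Vd (φ.comp (Va.subtype.prodMap Vb.subtype)) hΦmem
  have hΦ : ∀ x : Va × Vb, (Φ x : MvPolynomial (Fin 2) K)
      = F * (x.1 : MvPolynomial (Fin 2) K) + G * (x.2 : MvPolynomial (Fin 2) K) := fun x => rfl
  -- the map c ↦ (c G, -(c F))
  have hθ1 : ∀ c : Vc, (LinearMap.mulLeft K G).comp Vc.subtype c ∈ Va := by
    rintro ⟨c, hc⟩
    have hc' : c.totalDegree ≤ k := (mem_restrictTotalDegree _ _ _).mp hc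
    show G * c ∈ Va
    exact (mem_restrictTotalDegree _ _ _).mpr (le_trans (totalDegree_mul _ _) (by omega))
  have hθ2 : ∀ c : Vc, (-(LinearMap.mulLeft K F)).comp Vc.subtype c ∈ Vb := by
    rintro ⟨c, hc⟩
    have hc' : c.totalDegree ≤ k := (mem_restrictTotalDegree _ _ _).mp hc
    refine (mem_restrictTotalDegree _ _ _).mpr ?_
    show (-(F * c)).totalDegree ≤ m + k
    rw [totalDegree_neg]
    exact le_trans (totalDegree_mul _ _) (by omega)
  let θ : Vc →ₗ[K] (Va × Vb) :=
    (LinearMap.codRestrict Va ((LinearMap.mulLeft K G).comp Vc.subtype) hθ1).prod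
      (LinearMap.codRestrict Vb ((-(LinearMap.mulLeft K F)).comp Vc.subtype) hθ2)
  have hθval : ∀ c : Vc, ((θ c).1 : MvPolynomial (Fin 2) K) = G * c ∧
      ((θ c).2 : MvPolynomial (Fin 2) K) = -(F * (c : MvPolynomial (Fin 2) K)) := fun c => ⟨rfl, rfl⟩
  have hθinj : Function.Injective θ := by
    intro c c' h
    have h1 := (hθval c).1
    rw [h, (hθval c').1] at h1
    exact Subtype.ext ((mul_left_cancel₀ hG h1).symm)
  have hrange : LinearMap.range θ = LinearMap.ker Φ := by
    ext x
    simp only [LinearMap.mem_range, LinearMap.mem_ker]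
    constructor
    · rintro ⟨c, rfl⟩
      apply Subtype.ext
      show ((Φ (θ c)) : MvPolynomial (Fin 2) K) = 0
      rw [hΦ, (hθval c).1, (hθval c).2]
      ring
    · intro hx
      have hx' : F * (x.1 : MvPolynomial (Fin 2) K) + G * (x.2 : MvPolynomial (Fin 2) K) = 0 := by
        have := congrArg (fun y : Vd => (y : MvPolynomial (Fin 2) K)) hx
        simpa [hΦ] using this
      have hdvd : G ∣ (x.1 : MvPolynomial (Fin 2) K) := by
        refine hcd.symm.dvd_of_dvd_mul_left (y := F) ⟨-(x.2 : MvPolynomial (Fin 2) K), ?_⟩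
        rw [mul_comm]
        linear_combination hx'
      obtain ⟨c, hc⟩ := hdvd
      have hcdeg : c.totalDegree ≤ k := by
        rcases eq_or_ne c 0 with rfl | hc0
        · simp
        · have hx1 : ((x.1 : Va) : MvPolynomial (Fin 2) K).totalDegree ≤ n + k :=
            (mem_restrictTotalDegree _ _ _).mp x.1.2
          rw [hc, my_totalDegree_mul_eq hG hc0] at hx1
          omega
      have hb : (x.2 : MvPolynomial (Fin 2) K) = -(F * c) := by
        have h2 : F * (G * c) + G * (x.2 : MvPolynomial (Fin 2) K) = 0 := by
          rw [← hc]; exact hx'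
        have h3 : G * (x.2 : MvPolynomial (Fin 2) K) = G * (-(F * c)) := by
          linear_combination h2
        exact mul_left_cancel₀ hG h3
      refine ⟨⟨c, (mem_restrictTotalDegree _ _ _).mpr hcdeg⟩, ?_⟩
      apply Prod.ext
      · exact Subtype.ext (by rw [(hθval _).1]; exact hc.symm)
      · exact Subtype.ext (by rw [(hθval _).2]; exact hb.symm)
  -- the evaluation map
  let ev : Vd →ₗ[K] (↥S → K) :=
    LinearMap.pi (fun z : ↥S =>
      (aeval ![(z : K × K).1, (z : K × K).2]).toLinearMap.comp Vd.subtype)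
  have hev : ∀ (p : Vd) (z : ↥S),
      ev p z = eval ![(z : K × K).1, (z : K × K).2] (p : MvPolynomial (Fin 2) K) := by
    intro p z
    rfl
  -- surjectivity of ev
  have hsurj : Function.Surjective ev := by
    intro f
    have hq : ∀ z : ↥S, ∃ q : MvPolynomial (Fin 2) K, q.totalDegree ≤ k ∧
        eval ![(z : K × K).1, (z : K × K).2] q = 1 ∧
        ∀ w ∈ S, w ≠ (z : K × K) → eval ![w.1, w.2] q = 0 := by
      intro z
      obtain ⟨q, h1, h2, h3⟩ := interp S z z.2
      exact ⟨q, hkS ▸ h1, h2, h3⟩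
    choose q hqdeg hq1 hq0 using hq
    have hgmem : (∑ z ∈ S.attach, C (f z) * q z) ∈ Vd := by
      refine Submodule.sum_mem _ fun z _ => ?_
      refine (mem_restrictTotalDegree _ _ _).mpr ?_
      refine le_trans (totalDegree_mul _ _) ?_
      rw [totalDegree_C]
      have := hqdeg z
      omega
    refine ⟨⟨_, hgmem⟩, ?_⟩
    funext w
    rw [hev]
    show eval ![(w : K × K).1, (w : K × K).2] (∑ z ∈ S.attach, C (f z) * q z) = f w
    rw [map_sum, Finset.sum_eq_single_of_mem w (Finset.mem_attach S w)]
    · rw [map_mul, eval_C, hq1 w, mul_one]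
    · intro z _ hzw
      rw [map_mul, eval_C, hq0 z (w : K × K) w.2 (fun hh => hzw (Subtype.ext hh.symm)), mul_zero]
  -- range Φ is contained in ker ev
  have hle : LinearMap.range Φ ≤ LinearMap.ker ev := by
    rintro x ⟨y, rfl⟩
    rw [LinearMap.mem_ker]
    funext z
    rw [hev, hΦ]
    rw [map_add, map_mul, map_mul, (hS z z.2).1, (hS z z.2).2, zero_mul, zero_mul, add_zero]
    rfl
  -- the dimension count
  have r1 := LinearMap.finrank_range_add_finrank_ker ev
  have r2 := LinearMap.finrank_range_add_finrank_ker Φ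
  have r3 : Module.finrank K (LinearMap.range ev) = k := by
    rw [LinearMap.range_eq_top.mpr hsurj, finrank_top, Module.finrank_pi, Fintype.card_coe, hkS]
  have r4 : Module.finrank K (LinearMap.ker Φ) = Module.finrank K Vc := by
    rw [← hrange, LinearMap.finrank_range_of_inj hθinj]
  have r5 : Module.finrank K (LinearMap.range Φ) ≤ Module.finrank K (LinearMap.ker ev) :=
    Submodule.finrank_mono hle
  have r6 : Module.finrank K (Va × Vb) = Module.finrank K Va + Module.finrank K Vb :=
    Module.finrank_prod
  have E1 : 2 * Module.finrank K Vd = (m + n + k + 1) * (m + n + k + 2) := finrank_rtd K (m + n + k)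
  have E2 : 2 * Module.finrank K Va = (n + k + 1) * (n + k + 2) := finrank_rtd K (n + k)
  have E3 : 2 * Module.finrank K Vb = (m + k + 1) * (m + k + 2) := finrank_rtd K (m + k)
  have E4 : 2 * Module.finrank K Vc = (k + 1) * (k + 2) := finrank_rtd K k
  have I : Module.finrank K Va + Module.finrank K Vb + k
      ≤ Module.finrank K Vd + Module.finrank K Vc := by omega
  have I2 : (n+k+1)*(n+k+2) + (m+k+1)*(m+k+2) + 2*k ≤ (m+n+k+1)*(m+n+k+2) + (k+1)*(k+2) := by
    omega
  nlinarith [I2]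
end


/- STATEMENT 17 (affine Bézout): Let K be algebraically closed and V, W ⊆ K² the zero sets of
polynomials F and G with no common non-constant divisor (i.e. every common divisor is a unit,
that is a nonzero constant).  Then V ∩ W is finite with at most deg(F)·deg(G) points. -/
theorem stmt17 {K : Type*} [Field K] [IsAlgClosed K]
    (F G : MvPolynomial (Fin 2) K)
    (hcd : ∀ d : MvPolynomial (Fin 2) K, d ∣ F → d ∣ G → IsUnit d) :
    {z : K × K | MvPolynomial.eval ![z.1, z.2] F = 0 ∧
        MvPolynomial.eval ![z.1, z.2] G = 0}.Finite ∧
    {z : K × K | MvPolynomial.eval ![z.1, z.2] F = 0 ∧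
        MvPolynomial.eval ![z.1, z.2] G = 0}.ncard ≤ F.totalDegree * G.totalDegree := by
  classical
  set Z := {z : K × K | MvPolynomial.eval ![z.1, z.2] F = 0 ∧
      MvPolynomial.eval ![z.1, z.2] G = 0} with hZ
  by_cases hF : F = 0
  · have hGu : IsUnit G := hcd G (hF ▸ dvd_zero G) dvd_rfl
    have hZe : Z = ∅ := by
      ext z
      simp only [hZ, Set.mem_setOf_eq, Set.mem_empty_iff_false, iff_false, not_and]
      intro _
      exact (hGu.map (eval ![z.1, z.2])).ne_zero
    rw [hZe]
    simp
  by_cases hG : G = 0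
  · have hFu : IsUnit F := hcd F dvd_rfl (hG ▸ dvd_zero F)
    have hZe : Z = ∅ := by
      ext z
      simp only [hZ, Set.mem_setOf_eq, Set.mem_empty_iff_false, iff_false, not_and]
      intro h
      exact absurd h (hFu.map (eval ![z.1, z.2])).ne_zero
    rw [hZe]
    simp
  have hrel : IsRelPrime F G := fun d h1 h2 => hcd d h1 h2
  have hbound : ∀ t : Finset (K × K), ↑t ⊆ Z → t.card ≤ F.totalDegree * G.totalDegree := by
    intro t ht
    exact key' F G hF hG hrel t (fun z hz => ht hz) _ _ _ le_rfl rfl rfl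
  have hfin : Z.Finite := by
    by_contra hinf
    obtain ⟨t, htZ, htc⟩ := Set.Infinite.exists_subset_card_eq hinf
      (F.totalDegree * G.totalDegree + 1)
    have := hbound t htZ
    omega
  refine ⟨hfin, ?_⟩
  rw [Set.ncard_eq_toFinset_card Z hfin]
  exact hbound hfin.toFinset (by simp)
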